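/- Let 0 < ξ₊ < ∞ and let q : (0, ξ₊) → ℝ be continuous. Suppose η, φ ∈ C²((0, ξ₊)) satisfy: η > 0 and φ > 0 on (0, ξ₊); f := -η'' + qη > 0 on (0, ξ₊); -φ'' + qφ = λφ on (0, ξ₊) for some λ ∈ ℝ; the products φη and φf are Lebesgue integrable on (0, ξ₊); and the Wronskian φ'η - φη' tends to 0 as ξ → 0⁺ and as ξ → ξ₊⁻. Then λ > 0. -/

import Mathlib

open Real MeasureTheory Set Filter Topology

/-- FTC on an open interval with limits at both endpoints. -/
theorem ftc_Ioo {a b La Lb : ℝ} (hab : a < b) {W W' : ℝ → ℝ}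
    (hd : ∀ x ∈ Ioo a b, HasDerivAt W (W' x) x)
    (hint : IntegrableOn W' (Ioo a b))
    (ha : Tendsto W (𝓝[>] a) (𝓝 La)) (hb : Tendsto W (𝓝[<] b) (𝓝 Lb)) :
    ∫ x in Ioo a b, W' x = Lb - La := by
  set u : ℕ → ℝ := fun n => a + (b - a) / (n + 2) with hu
  set v : ℕ → ℝ := fun n => b - (b - a) / (n + 2) with hv
  have hba : 0 < b - a := sub_pos.2 hab
  have hq : ∀ n : ℕ, 0 < (b - a) / ((n : ℝ) + 2) := fun n =>
    div_pos hba (by positivity)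
  have hq' : ∀ n : ℕ, (b - a) / ((n : ℝ) + 2) ≤ (b - a) / 2 := fun n =>
    div_le_div_of_nonneg_left hba.le two_pos (by linarith [Nat.cast_nonneg (α := ℝ) n])
  have hau : ∀ n, a < u n := fun n => by simp only [hu]; linarith [hq n]
  have hvb : ∀ n, v n < b := fun n => by simp only [hv]; linarith [hq n]
  have huv : ∀ n, u n ≤ v n := fun n => by
    simp only [hu, hv]; linarith [hq' n]
  have htu : Tendsto u atTop (𝓝 a) := by
    have : Tendsto (fun n : ℕ => (b - a) / ((n : ℝ) + 2)) atTop (𝓝 0) := by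
      apply Tendsto.div_atTop tendsto_const_nhds
      exact tendsto_atTop_add_const_right _ 2 tendsto_natCast_atTop_atTop
    simpa using tendsto_const_nhds.add this
  have htv : Tendsto v atTop (𝓝 b) := by
    have : Tendsto (fun n : ℕ => (b - a) / ((n : ℝ) + 2)) atTop (𝓝 0) := by
      apply Tendsto.div_atTop tendsto_const_nhds
      exact tendsto_atTop_add_const_right _ 2 tendsto_natCast_atTop_atTop
    simpa using tendsto_const_nhds.sub this
  have hcov : AECover ((volume : Measure ℝ).restrict (Ioo a b)) atTop
      (fun n => Icc (u n) (v n)) := aecover_Ioo_of_Icc htu htv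
  have hsub : ∀ n, Icc (u n) (v n) ⊆ Ioo a b := fun n x hx =>
    ⟨lt_of_lt_of_le (hau n) hx.1, lt_of_le_of_lt hx.2 (hvb n)⟩
  have hI : Tendsto (fun n => ∫ x in Icc (u n) (v n), W' x) atTop
      (𝓝 (∫ x in Ioo a b, W' x)) := by
    have := hcov.integral_tendsto_of_countably_generated hint
    refine this.congr fun n => ?_
    rw [Measure.restrict_restrict measurableSet_Icc,
      inter_eq_self_of_subset_left (hsub n)]
  have htu' : Tendsto u atTop (𝓝[>] a) :=
    tendsto_nhdsWithin_of_tendsto_nhds_of_eventually_within _ htu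
      (Eventually.of_forall fun n => hau n)
  have htv' : Tendsto v atTop (𝓝[<] b) :=
    tendsto_nhdsWithin_of_tendsto_nhds_of_eventually_within _ htv
      (Eventually.of_forall fun n => hvb n)
  have hW : Tendsto (fun n => W (v n) - W (u n)) atTop (𝓝 (Lb - La)) :=
    (hb.comp htv').sub (ha.comp htu')
  have heq : ∀ n, ∫ x in Icc (u n) (v n), W' x = W (v n) - W (u n) := by
    intro n
    rw [MeasureTheory.integral_Icc_eq_integral_Ioc,
      ← intervalIntegral.integral_of_le (huv n)]
    apply intervalIntegral.integral_eq_sub_of_hasDerivAt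
    · intro x hx
      rw [uIcc_of_le (huv n)] at hx
      exact hd x (hsub n hx)
    · rw [intervalIntegrable_iff_integrableOn_Ioc_of_le (huv n)]
      exact hint.mono_set fun x hx => hsub n ⟨hx.1.le, hx.2⟩
  have : Tendsto (fun n => ∫ x in Icc (u n) (v n), W' x) atTop (𝓝 (Lb - La)) := by
    simpa only [heq] using hW
  exact tendsto_nhds_unique hI this

/-- Positivity lemma behind Proposition 2 (S.S. Lin).  If `η > 0` satisfies
`-η'' + qη = f > 0`, `φ > 0` is an eigenfunction `-φ'' + qφ = λφ`, the products
`φη` and `φf` are integrable on `(0,ξ₊)`, and the Wronskian `φ'η - φη'` tends to `0`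
at both endpoints, then `λ > 0`. -/
theorem eigenvalue_positive
    (ξp lam : ℝ) (q η φ : ℝ → ℝ) (hξ : 0 < ξp)
    (hq : ContinuousOn q (Ioo 0 ξp))
    (hη : ContDiffOn ℝ 2 η (Ioo 0 ξp)) (hφ : ContDiffOn ℝ 2 φ (Ioo 0 ξp))
    (hηpos : ∀ ξ ∈ Ioo 0 ξp, 0 < η ξ) (hφpos : ∀ ξ ∈ Ioo 0 ξp, 0 < φ ξ)
    (hf : ∀ ξ ∈ Ioo 0 ξp, 0 < -(deriv (deriv η) ξ) + q ξ * η ξ)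
    (heig : ∀ ξ ∈ Ioo 0 ξp, -(deriv (deriv φ) ξ) + q ξ * φ ξ = lam * φ ξ)
    (hint1 : IntegrableOn (fun ξ => φ ξ * η ξ) (Ioo 0 ξp))
    (hint2 : IntegrableOn
      (fun ξ => φ ξ * (-(deriv (deriv η) ξ) + q ξ * η ξ)) (Ioo 0 ξp))
    (hw0 : Tendsto (fun ξ => deriv φ ξ * η ξ - φ ξ * deriv η ξ) (𝓝[>] 0) (𝓝 0))
    (hw1 : Tendsto (fun ξ => deriv φ ξ * η ξ - φ ξ * deriv η ξ) (𝓝[<] ξp) (𝓝 0)) :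
    0 < lam := by
  set s : Set ℝ := Ioo 0 ξp with hs
  have hso : IsOpen s := isOpen_Ioo
  -- derivatives
  have hdφ : ∀ x ∈ s, HasDerivAt φ (deriv φ x) x := fun x hx =>
    (((hφ.contDiffAt (hso.mem_nhds hx)).differentiableAt (by norm_num)).hasDerivAt)
  have hdη : ∀ x ∈ s, HasDerivAt η (deriv η x) x := fun x hx =>
    (((hη.contDiffAt (hso.mem_nhds hx)).differentiableAt (by norm_num)).hasDerivAt)
  have hφ1 : ContDiffOn ℝ 1 (deriv φ) s := hφ.deriv_of_isOpen hso (by norm_num)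
  have hη1 : ContDiffOn ℝ 1 (deriv η) s := hη.deriv_of_isOpen hso (by norm_num)
  have hdφ' : ∀ x ∈ s, HasDerivAt (deriv φ) (deriv (deriv φ) x) x := fun x hx =>
    (((hφ1.contDiffAt (hso.mem_nhds hx)).differentiableAt (by norm_num)).hasDerivAt)
  have hdη' : ∀ x ∈ s, HasDerivAt (deriv η) (deriv (deriv η) x) x := fun x hx =>
    (((hη1.contDiffAt (hso.mem_nhds hx)).differentiableAt (by norm_num)).hasDerivAt)
  -- Wronskian derivative
  set G : ℝ → ℝ := fun x =>
    φ x * (-(deriv (deriv η) x) + q x * η x) - lam * (φ x * η x) with hG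
  have hW : ∀ x ∈ s, HasDerivAt
      (fun ξ => deriv φ ξ * η ξ - φ ξ * deriv η ξ) (G x) x := by
    intro x hx
    have h := (((hdφ' x hx).mul (hdη x hx)).sub ((hdφ x hx).mul (hdη' x hx)))
    have he := heig x hx
    refine h.congr_deriv ?_
    show _ = φ x * (-(deriv (deriv η) x) + q x * η x) - lam * (φ x * η x)
    linear_combination -(η x) * he
  have hGint : IntegrableOn G s := hint2.sub (hint1.const_mul lam)
  have hzero : ∫ x in s, G x = 0 - 0 := ftc_Ioo hξ hW hGint hw0 hw1
  have hsplit : ∫ x in s, G x =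
      (∫ x in s, φ x * (-(deriv (deriv η) x) + q x * η x)) -
        lam * ∫ x in s, φ x * η x := by
    rw [hG]
    rw [integral_sub hint2 (hint1.const_mul lam), integral_const_mul]
  -- positivity of the two integrals
  have hvs : (0 : ENNReal) < volume s := by
    rw [hs, Real.volume_Ioo]
    simpa using hξ
  have hpos1 : 0 < ∫ x in s, φ x * η x := by
    rw [setIntegral_pos_iff_support_of_nonneg_ae
      (((ae_restrict_iff' measurableSet_Ioo).2 (Eventually.of_forall
        fun x hx => (mul_pos (hφpos x hx) (hηpos x hx)).le))) hint1]
    refine lt_of_lt_of_le hvs (measure_mono fun x hx => ?_)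
    exact ⟨ne_of_gt (mul_pos (hφpos x hx) (hηpos x hx)), hx⟩
  have hpos2 : 0 < ∫ x in s, φ x * (-(deriv (deriv η) x) + q x * η x) := by
    rw [setIntegral_pos_iff_support_of_nonneg_ae
      (((ae_restrict_iff' measurableSet_Ioo).2 (Eventually.of_forall
        fun x hx => (mul_pos (hφpos x hx) (hf x hx)).le))) hint2]
    refine lt_of_lt_of_le hvs (measure_mono fun x hx => ?_)
    exact ⟨ne_of_gt (mul_pos (hφpos x hx) (hf x hx)), hx⟩
  rw [hsplit] at hzero
  nlinarith [hzero, hpos1, hpos2]
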